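/- For every positive integer $m$, the rational number $d_{m,m}=\frac{1}{2m^2}\sum_{l\mid m}(-1)^l\,\mu(m/l)\binom{2l}{l}$ is an integer. -/

import Mathlib

open Finset Nat ArithmeticFunction

/-- integers in `[1,c]` not divisible by `p` -/
def Pset (p c : ℕ) : Finset ℕ := (Finset.Ioc 0 c).filter (fun i => ¬ p ∣ i)

lemma prod_Ioc_zero_id (n : ℕ) : ∏ i ∈ Ioc 0 n, i = n ! := by
  induction n with
  | zero => simp
  | succ n ih =>
    rw [Finset.prod_Ioc_succ_top (Nat.zero_le n), ih, Nat.factorial_succ, mul_comm]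

lemma filter_dvd_eq_image (p N : ℕ) (hp : 0 < p) :
    (Finset.Ioc 0 (p*N)).filter (fun i => p ∣ i) = (Finset.Ioc 0 N).image (fun j => p * j) := by
  ext i
  simp only [Finset.mem_filter, Finset.mem_Ioc, Finset.mem_image]
  constructor
  · rintro ⟨⟨h0, hle⟩, j, rfl⟩
    have hj : j ≠ 0 := by rintro rfl; simp at h0
    exact ⟨j, ⟨Nat.pos_of_ne_zero hj, Nat.le_of_mul_le_mul_left hle hp⟩, rfl⟩
  · rintro ⟨j, ⟨h0, hle⟩, rfl⟩
    exact ⟨⟨Nat.mul_pos hp h0, Nat.mul_le_mul_left p hle⟩, ⟨j, rfl⟩⟩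

lemma prod_split (p N : ℕ) (hp : 0 < p) (f : ℕ → ℕ) :
    ∏ i ∈ Ioc 0 (p*N), f i
      = (∏ j ∈ Ioc 0 N, f (p*j)) * ∏ i ∈ Pset p (p*N), f i := by
  rw [← Finset.prod_filter_mul_prod_filter_not (Ioc 0 (p*N)) (fun i => p ∣ i) f,
    filter_dvd_eq_image p N hp,
    Finset.prod_image (fun a _ b _ h => Nat.eq_of_mul_eq_mul_left hp h)]
  rfl

lemma prod_shift (c : ℕ) : (∏ i ∈ Ioc 0 c, (c + i)) * c ! = (2*c)! := by
  have h1 : (Ioc 0 c).image (fun i => c + i) = Ioc c (2*c) := by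
    ext i
    simp only [Finset.mem_image, Finset.mem_Ioc]
    constructor
    · rintro ⟨j, hj, rfl⟩; omega
    · intro hi; exact ⟨i - c, by omega, by omega⟩
  have h2 : ∏ i ∈ Ioc 0 c, (c + i) = ∏ i ∈ Ioc c (2*c), i := by
    rw [← h1, Finset.prod_image (fun a _ b _ h => by omega)]
  rw [h2, ← prod_Ioc_zero_id c, ← prod_Ioc_zero_id (2*c), mul_comm,
    Finset.prod_Ioc_consecutive _ (Nat.zero_le c) (by omega)]

/-- key natural-number identity:
`C(2pN, pN) * ∏_{i ∈ P} i = C(2N,N) * ∏_{i ∈ P} (pN + i)` where `P = {i ≤ pN : p ∤ i}`. -/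
lemma I1 (p N : ℕ) (hp : 0 < p) :
    (2*(p*N)).choose (p*N) * ∏ i ∈ Pset p (p*N), i
      = (2*N).choose N * ∏ i ∈ Pset p (p*N), (p*N + i) := by
  set c := p*N with hc
  set A := ∏ i ∈ Pset p c, i with hA
  set B := ∏ i ∈ Pset p c, (c + i) with hB
  set H := ∏ j ∈ Ioc 0 N, (N + j) with hH
  -- c! = p^N * N! * A
  have e1 : c ! = p^N * (N ! * A) := by
    rw [← prod_Ioc_zero_id c, hc, prod_split p N hp (fun i => i)]
    rw [Finset.prod_mul_distrib, Finset.prod_const, Nat.card_Ioc, Nat.sub_zero,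
      prod_Ioc_zero_id, mul_assoc]
  -- (2c)! = c! * (p^N * H * B)
  have e2 : (2*c) ! = c ! * (p^N * (H * B)) := by
    rw [← prod_shift c, hc, prod_split p N hp (fun i => p*N + i)]
    have : ∀ j, p*N + p*j = p * (N + j) := fun j => by ring
    rw [mul_comm _ (c !)]
    congr 1
    calc (∏ j ∈ Ioc 0 N, (p*N + p*j)) * ∏ i ∈ Pset p (p*N), (p*N + i)
        = (∏ j ∈ Ioc 0 N, p * (N + j)) * B := by
          rw [hB, hc]; congr 1; exact Finset.prod_congr rfl (fun j _ => this j)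
      _ = (p^N * H) * B := by
          rw [Finset.prod_mul_distrib, Finset.prod_const, Nat.card_Ioc, Nat.sub_zero, hH]
      _ = p^N * (H * B) := by ring
  -- (2N)! = N! * H
  have e3 : (2*N) ! = N ! * H := by
    rw [hH, ← prod_shift N, mul_comm]
  -- choose identities
  have c1 : (2*c).choose c * (c ! * c !) = (2*c)! := by
    have := Nat.choose_mul_factorial_mul_factorial (n := 2*c) (k := c) (by omega)
    have h2c : 2*c - c = c := by omega
    rw [h2c] at this; rw [← this]; ring
  have c2 : (2*N).choose N * (N ! * N !) = (2*N)! := by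
    have := Nat.choose_mul_factorial_mul_factorial (n := 2*N) (k := N) (by omega)
    have h2N : 2*N - N = N := by omega
    rw [h2N] at this; rw [← this]; ring
  -- assemble
  have hcfac : 0 < c ! := Nat.factorial_pos c
  have hNfac : 0 < N ! := Nat.factorial_pos N
  have hpN : 0 < p^N := Nat.pow_pos hp
  -- from c1 and e2: choose2c * c! = p^N * (H * B)
  have e4 : (2*c).choose c * c ! = p^N * (H * B) := by
    have : (2*c).choose c * c ! * c ! = (p^N * (H * B)) * c ! := by
      calc (2*c).choose c * c ! * c ! = (2*c).choose c * (c ! * c !) := by ring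
        _ = (2*c)! := c1
        _ = c ! * (p^N * (H * B)) := e2
        _ = (p^N * (H * B)) * c ! := by ring
    exact Nat.eq_of_mul_eq_mul_right hcfac this
  -- substitute e1 : c! = p^N * (N! * A)
  have e5 : (2*c).choose c * (N ! * A) = H * B := by
    have : p^N * ((2*c).choose c * (N ! * A)) = p^N * (H * B) := by
      rw [← e4, e1]; ring
    exact Nat.eq_of_mul_eq_mul_left hpN this
  -- from c2, e3 : choose2N * N! = H
  have e6 : (2*N).choose N * N ! = H := by
    have : (2*N).choose N * N ! * N ! = H * N ! := by
      calc (2*N).choose N * N ! * N ! = (2*N).choose N * (N ! * N !) := by ring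
        _ = (2*N)! := c2
        _ = N ! * H := e3
        _ = H * N ! := by ring
    exact Nat.eq_of_mul_eq_mul_right hNfac this
  -- final cancellation
  have : N ! * ((2*c).choose c * A) = N ! * ((2*N).choose N * B) := by
    calc N ! * ((2*c).choose c * A) = (2*c).choose c * (N ! * A) := by ring
      _ = H * B := e5
      _ = ((2*N).choose N * N !) * B := by rw [e6]
      _ = N ! * ((2*N).choose N * B) := by ring
  exact Nat.eq_of_mul_eq_mul_left hNfac this


/-- Product over a finset closed under the fixed-point-free involution `i ↦ c - i`
is determined by the pair-products. -/
lemma prod_pairing {R : Type*} [CommMonoid R] (c : ℕ) (f g : ℕ → R) :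
    ∀ P : Finset ℕ, (∀ i ∈ P, i ≤ c) → (∀ i ∈ P, c - i ∈ P) → (∀ i ∈ P, 2*i ≠ c) →
      (∀ i ∈ P, f i * f (c-i) = g i * g (c-i)) →
      ∏ i ∈ P, f i = ∏ i ∈ P, g i := by
  intro P
  induction P using Finset.strongInduction with
  | _ P ih =>
    intro hle hsym hfix hfg
    rcases P.eq_empty_or_nonempty with rfl | ⟨a, ha⟩
    · simp
    · have hac : a ≤ c := hle a ha
      have hb : c - a ∈ P := hsym a ha
      have hab : a ≠ c - a := fun h => hfix a ha (by omega)
      set Q := (P.erase a).erase (c - a) with hQ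
      have hQP : Q ⊂ P := by
        refine HasSubset.Subset.ssubset_of_ne ?_ ?_
        · intro x hx
          exact Finset.mem_of_mem_erase (Finset.mem_of_mem_erase hx)
        · intro h
          have : a ∈ Q := h ▸ ha
          simp [hQ, Finset.mem_erase] at this
      have hmemQ : ∀ x, x ∈ Q ↔ (x ∈ P ∧ x ≠ a ∧ x ≠ c - a) := by
        intro x; simp [hQ, Finset.mem_erase]; tauto
      have hPeq : P = insert a (insert (c-a) Q) := by
        ext x
        simp only [Finset.mem_insert, hmemQ]
        constructor
        · intro hx
          by_cases h1 : x = a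
          · tauto
          · by_cases h2 : x = c - a <;> tauto
        · rintro (rfl | rfl | hx) <;> tauto
      have hnotinsQ : a ∉ insert (c-a) Q := by
        intro h
        rcases Finset.mem_insert.mp h with h | h
        · exact hab h
        · exact ((hmemQ a).1 h).2.1 rfl
      have hnotQ : c - a ∉ Q := by simp [hmemQ]
      -- restricted hypotheses on Q
      have hle' : ∀ i ∈ Q, i ≤ c := fun i hi => hle i ((hmemQ i).1 hi).1
      have hsym' : ∀ i ∈ Q, c - i ∈ Q := by
        intro i hi
        obtain ⟨hiP, hia, hib⟩ := (hmemQ i).1 hi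
        have hiq : i ≤ c := hle i hiP
        refine (hmemQ _).2 ⟨hsym i hiP, ?_, ?_⟩
        · intro h; exact hib (by omega)
        · intro h; exact hia (by omega)
      have hfix' : ∀ i ∈ Q, 2*i ≠ c := fun i hi => hfix i ((hmemQ i).1 hi).1
      have hfg' : ∀ i ∈ Q, f i * f (c-i) = g i * g (c-i) :=
        fun i hi => hfg i ((hmemQ i).1 hi).1
      rw [hPeq, Finset.prod_insert hnotinsQ, Finset.prod_insert hnotQ,
        Finset.prod_insert hnotinsQ, Finset.prod_insert hnotQ,
        ← mul_assoc, ← mul_assoc, ih Q hQP hle' hsym' hfix' hfg']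
      congr 1
      have hcc : c - (c - a) = a := by omega
      have := hfg a ha
      rw [this]

lemma mem_Pset {p c i : ℕ} : i ∈ Pset p c ↔ (0 < i ∧ i ≤ c ∧ ¬ p ∣ i) := by
  simp only [Pset, Finset.mem_filter, Finset.mem_Ioc]; tauto

lemma Pset_symm {p c : ℕ} (hpc : p ∣ c) {i : ℕ} (hi : i ∈ Pset p c) : c - i ∈ Pset p c := by
  obtain ⟨h0, hle, hnd⟩ := mem_Pset.mp hi
  have hic : i ≠ c := fun h => hnd (h ▸ hpc)
  refine mem_Pset.mpr ⟨by omega, by omega, fun h => hnd ?_⟩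
  have := Nat.dvd_sub hpc h
  rwa [Nat.sub_sub_self hle] at this

lemma Pset_prod_isUnit (p c j : ℕ) (hp : p.Prime) :
    IsUnit ((∏ i ∈ Pset p c, i : ℕ) : ZMod (p^j)) := by
  have : NeZero (p^j) := ⟨pow_ne_zero j hp.pos.ne'⟩
  rw [ZMod.isUnit_iff_coprime]
  refine Nat.Coprime.pow_right j (Nat.Coprime.prod_left ?_)
  intro i hi
  exact (Nat.Prime.coprime_iff_not_dvd hp).mpr (mem_Pset.mp hi).2.2 |>.symm

/-- the pair-product congruence: in `ZMod n` with `n ∣ 2c²`,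
`(c+i)(c+(c-i)) = i(c-i)` for `i ≤ c`. -/
lemma pair_values {n c i : ℕ} (hc : (n:ℕ) ∣ 2*c^2) (hi : i ≤ c) :
    ((c + i : ℕ) : ZMod n) * ((c + (c - i) : ℕ) : ZMod n)
      = ((i : ℕ) : ZMod n) * (((c - i : ℕ)) : ZMod n) := by
  have h2c : ((2*c^2 : ℕ) : ZMod n) = 0 := (ZMod.natCast_eq_zero_iff _ _).mpr hc
  have hsub : ((c - i : ℕ) : ZMod n) = (c : ZMod n) - (i : ℕ) := by
    push_cast [Nat.cast_sub hi]; ring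
  push_cast [hsub, Nat.cast_sub hi] at *
  linear_combination h2c

/-- Main congruence: if `p^j ∣ 2 p² N²` and (`p ≠ 2` or `2 ∣ N`) then
`C(2pN, pN) ≡ C(2N, N) mod p^j`. -/
lemma keyCong (p j N : ℕ) (hp : p.Prime) (hj : p^j ∣ 2*p^2*N^2) (hpar : p ≠ 2 ∨ 2 ∣ N) :
    (((2*(p*N)).choose (p*N) : ℕ) : ZMod (p^j)) = (((2*N).choose N : ℕ) : ZMod (p^j)) := by
  set c := p*N with hc
  set R := ZMod (p^j)
  have hpc : p ∣ c := Dvd.intro N rfl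
  have hdvd2c2 : (p^j : ℕ) ∣ 2*c^2 := by
    have : 2*c^2 = 2*p^2*N^2 := by rw [hc]; ring
    rw [this]; exact hj
  have hfix : ∀ i ∈ Pset p c, 2*i ≠ c := by
    intro i hi h
    obtain ⟨h0, hle, hnd⟩ := mem_Pset.mp hi
    rcases hpar with hodd | heven
    · have : p ∣ 2*i := h ▸ hpc
      rcases (Nat.Prime.dvd_mul hp).mp this with h2 | hdi
      · exact hodd ((Nat.prime_dvd_prime_iff_eq hp Nat.prime_two).mp h2)
      · exact hnd hdi
    · -- p = 2 impossible unless..., here 2 ∣ N: c = p*N; 2*i = p*N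
      by_cases hp2 : p = 2
      · subst hp2
        have : i = N := by omega
        exact hnd (this ▸ heven)
      · have : p ∣ 2*i := h ▸ hpc
        rcases (Nat.Prime.dvd_mul hp).mp this with h2 | hdi
        · exact hp2 ((Nat.prime_dvd_prime_iff_eq hp Nat.prime_two).mp h2)
        · exact hnd hdi
  have hB : (∏ i ∈ Pset p c, ((c + i : ℕ) : R)) = ∏ i ∈ Pset p c, ((i : ℕ) : R) := by
    refine prod_pairing c (fun i => ((c + i : ℕ) : R)) (fun i => ((i:ℕ) : R)) (Pset p c)
      (fun i hi => (mem_Pset.mp hi).2.1) (fun i hi => Pset_symm hpc hi) hfix ?_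
    intro i hi
    exact pair_values hdvd2c2 (mem_Pset.mp hi).2.1
  have hI := congrArg (fun t : ℕ => (t : R)) (I1 p N hp.pos)
  rw [Nat.cast_mul, Nat.cast_prod, Nat.cast_mul, Nat.cast_prod] at hI
  rw [hB] at hI
  have hA := Pset_prod_isUnit p c j hp
  rw [Nat.cast_prod] at hA
  exact hA.mul_right_cancel hI

/-- For odd `N`: `C(4N, 2N) ≡ 3 C(2N,N) mod 8`. -/
lemma keyCong2 (N : ℕ) (hN : Odd N) :
    (((2*(2*N)).choose (2*N) : ℕ) : ZMod 8) = 3 * (((2*N).choose N : ℕ) : ZMod 8) := by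
  have h8 : (8 : ℕ) = 2^3 := by norm_num
  set c := 2*N with hc
  set R := ZMod 8
  have hNpos : 0 < N := hN.pos
  have hNP : N ∈ Pset 2 c := mem_Pset.mpr ⟨hNpos, by omega, by
    rintro ⟨t, rfl⟩; exact (Nat.not_odd_iff_even.mpr ⟨t, by ring⟩) hN⟩
  have hpc : (2:ℕ) ∣ c := Dvd.intro N rfl
  have hdvd : (8:ℕ) ∣ 2*c^2 := ⟨N^2, by rw [hc]; ring⟩
  set P' := (Pset 2 c).erase N with hP'
  have hmemP' : ∀ i, i ∈ P' ↔ (i ∈ Pset 2 c ∧ i ≠ N) := by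
    intro i; rw [hP', Finset.mem_erase]; tauto
  have hpair : (∏ i ∈ P', ((c + i : ℕ) : R)) = ∏ i ∈ P', ((i : ℕ) : R) := by
    refine prod_pairing c _ _ P' (fun i hi => (mem_Pset.mp ((hmemP' i).mp hi).1).2.1)
      ?_ ?_ ?_
    · intro i hi
      obtain ⟨hiP, hiN⟩ := (hmemP' i).mp hi
      have hile : i ≤ c := (mem_Pset.mp hiP).2.1
      refine (hmemP' _).mpr ⟨Pset_symm hpc hiP, fun h => hiN (by omega)⟩
    · intro i hi h
      exact ((hmemP' i).mp hi).2 (by omega)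
    · intro i hi
      exact pair_values hdvd (mem_Pset.mp ((hmemP' i).mp hi).1).2.1
  have hI := congrArg (fun t : ℕ => (t : R)) (I1 2 N (by norm_num))
  rw [Nat.cast_mul, Nat.cast_prod, Nat.cast_mul, Nat.cast_prod] at hI
  rw [← Finset.mul_prod_erase _ _ hNP, ← Finset.mul_prod_erase _ _ hNP, ← hP'] at hI
  rw [hpair] at hI
  have hcN : ((c + N : ℕ) : R) = 3 * ((N:ℕ) : R) := by
    have : c + N = 3 * N := by omega
    rw [this, Nat.cast_mul, Nat.cast_ofNat]
  rw [hcN] at hI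
  -- hI : C₁ * (N * ∏') = C₂ * (3 * N * ∏')
  have hA : IsUnit (((N : ℕ) : R) * ∏ i ∈ P', ((i:ℕ) : R)) := by
    have h1 : IsUnit ((∏ i ∈ Pset 2 c, i : ℕ) : ZMod (2^3)) := Pset_prod_isUnit 2 c 3 Nat.prime_two
    rw [← h8] at h1
    rw [Nat.cast_prod, ← Finset.mul_prod_erase _ _ hNP, ← hP'] at h1
    exact h1
  have goal' : (((2*(2*N)).choose (2*N) : ℕ) : R) * (((N : ℕ) : R) * ∏ i ∈ P', ((i:ℕ) : R))
      = (3 * (((2*N).choose N : ℕ) : R)) * (((N : ℕ) : R) * ∏ i ∈ P', ((i:ℕ) : R)) := by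
    rw [hI]; ring
  exact hA.mul_right_cancel goal'


lemma sum_divisors_mul_coprime {M : Type*} [AddCommMonoid M] {a n : ℕ}
    (h : Nat.Coprime a n) (ha : a ≠ 0) (hn : n ≠ 0) (f : ℕ → M) :
    ∑ l ∈ (a*n).divisors, f l = ∑ x ∈ a.divisors, ∑ d ∈ n.divisors, f (x*d) := by
  rw [← Finset.sum_product']
  refine (Finset.sum_nbij' (i := fun lp : ℕ × ℕ => lp.1 * lp.2)
    (j := fun l => (a.gcd l, n.gcd l)) ?_ ?_ ?_ ?_ ?_).symm
  · rintro ⟨x, d⟩ hxd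
    rw [Finset.mem_product] at hxd
    obtain ⟨hx, hd⟩ := hxd
    rw [Nat.mem_divisors] at *
    exact ⟨mul_dvd_mul hx.1 hd.1, mul_ne_zero ha hn⟩
  · intro l hl
    rw [Nat.mem_divisors] at hl
    rw [Finset.mem_product, Nat.mem_divisors, Nat.mem_divisors]
    exact ⟨⟨Nat.gcd_dvd_left _ _, ha⟩, ⟨Nat.gcd_dvd_left _ _, hn⟩⟩
  · rintro ⟨x, d⟩ hxd
    rw [Finset.mem_product, Nat.mem_divisors, Nat.mem_divisors] at hxd
    obtain ⟨⟨hx, _⟩, ⟨hd, _⟩⟩ := hxd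
    have hxd' : Nat.Coprime x d := Nat.Coprime.coprime_dvd_right hd (Nat.Coprime.coprime_dvd_left hx h)
    have h1 : a.gcd (x*d) = x := by
      rw [Nat.Coprime.gcd_mul a hxd', Nat.gcd_eq_right hx,
        Nat.Coprime.gcd_eq_one (Nat.Coprime.coprime_dvd_right hd h), mul_one]
    have h2 : n.gcd (x*d) = d := by
      rw [Nat.Coprime.gcd_mul n hxd', Nat.gcd_eq_right hd,
        Nat.Coprime.gcd_eq_one (Nat.Coprime.coprime_dvd_right hx h.symm), one_mul]
    simp [h1, h2]
  · intro l hl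
    rw [Nat.mem_divisors] at hl
    have h0 : l.gcd (a*n) = l := Nat.gcd_eq_left hl.1
    rw [Nat.Coprime.gcd_mul l h] at h0
    simp only []
    rw [Nat.gcd_comm a l, Nat.gcd_comm n l]
    exact h0
  · rintro ⟨x, d⟩ _; rfl

open ArithmeticFunction

noncomputable def bfun (l : ℕ) : ℤ := (-1)^l * ((2*l).choose l : ℤ)

noncomputable def Sfun (m : ℕ) : ℤ :=
  ∑ l ∈ m.divisors, (moebius (m/l) : ℤ) * bfun l

lemma regroup (p k n : ℕ) (hp : p.Prime) (hk : 1 ≤ k) (hn : n ≠ 0) (hpn : ¬ p ∣ n) :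
    Sfun (p^k * n)
      = ∑ d ∈ n.divisors, (moebius (n/d) : ℤ) * (bfun (p^k*d) - bfun (p^(k-1)*d)) := by
  have hcop : Nat.Coprime (p^k) n :=
    Nat.Coprime.pow_left k ((Nat.Prime.coprime_iff_not_dvd hp).mpr hpn)
  have hpk0 : p^k ≠ 0 := pow_ne_zero k hp.pos.ne'
  rw [Sfun, sum_divisors_mul_coprime hcop hpk0 hn]
  rw [Nat.sum_divisors_prime_pow hp]
  -- rewrite each term
  have hterm : ∀ j ∈ Finset.range (k+1),
      (∑ d ∈ n.divisors, (moebius ((p^k*n)/(p^j*d)) : ℤ) * bfun (p^j*d))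
        = (moebius (p^(k-j)) : ℤ) * ∑ d ∈ n.divisors, (moebius (n/d) : ℤ) * bfun (p^j*d) := by
    intro j hj
    rw [Finset.mem_range] at hj
    have hjk : j ≤ k := by omega
    rw [Finset.mul_sum]
    refine Finset.sum_congr rfl ?_
    intro d hd
    rw [Nat.mem_divisors] at hd
    have hdiv : (p^k*n)/(p^j*d) = p^(k-j) * (n/d) := by
      rw [← Nat.div_mul_div_comm (pow_dvd_pow p hjk) hd.1, Nat.pow_div hjk hp.pos]
    have hndd : ¬ p ∣ (n/d) := fun h => hpn (h.trans (Nat.div_dvd_of_dvd hd.1))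
    have hcop2 : Nat.Coprime (p^(k-j)) (n/d) :=
      Nat.Coprime.pow_left _ ((Nat.Prime.coprime_iff_not_dvd hp).mpr hndd)
    rw [hdiv, isMultiplicative_moebius.map_mul_of_coprime hcop2]
    push_cast
    ring
  rw [Finset.sum_congr rfl hterm]
  -- split off last two terms
  obtain ⟨k', rfl⟩ : ∃ k', k = k' + 1 := ⟨k - 1, by omega⟩
  rw [Finset.sum_range_succ, Finset.sum_range_succ]
  have h0 : ∀ j ∈ Finset.range k', (moebius (p^(k'+1-j)) : ℤ) *
      ∑ d ∈ n.divisors, (moebius (n/d) : ℤ) * bfun (p^j*d) = 0 := by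
    intro j hj
    rw [Finset.mem_range] at hj
    have h2 : k'+1-j ≠ 0 := by omega
    rw [moebius_apply_prime_pow hp h2, if_neg (by omega)]
    simp
  rw [Finset.sum_eq_zero h0, zero_add]
  have e1 : k'+1-k' = 1 := by omega
  have e2 : k'+1-(k'+1) = 0 := by omega
  rw [e1, e2, pow_one, pow_zero, moebius_apply_prime hp, moebius_apply_one]
  have e3 : k'+1-1 = k' := by omega
  rw [e3, Finset.mul_sum, Finset.mul_sum, ← Finset.sum_add_distrib]
  refine Finset.sum_congr rfl ?_
  intro d _
  push_cast
  ring
section part5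
open Finset Nat ArithmeticFunction

lemma two_dvd_choose (N : ℕ) (hN : N ≠ 0) : 2 ∣ (2*N).choose N := by
  obtain ⟨N', rfl⟩ : ∃ N', N = N'+1 := ⟨N-1, by omega⟩
  have h1 : 2*(N'+1) = (2*N'+1)+1 := by ring
  rw [h1, Nat.choose_succ_succ]
  have h2 : (2*N'+1).choose N' = (2*N'+1).choose (N'+1) := by
    have := Nat.choose_symm (n := 2*N'+1) (k := N'+1) (by omega)
    have h3 : 2*N'+1-(N'+1) = N' := by omega
    rw [h3] at this
    exact this
  rw [h2]
  exact ⟨_, (two_mul _).symm⟩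

lemma dvd_of_zmod_eq {n a b : ℕ} (h : ((a:ℕ) : ZMod n) = (b : ZMod n)) :
    (n : ℤ) ∣ (b : ℤ) - (a : ℤ) :=
  ((ZMod.natCast_eq_natCast_iff _ _ _).mp h).dvd

lemma t_odd (p k d : ℕ) (hp : p.Prime) (hodd : p ≠ 2) (hk : 1 ≤ k) (hd : d ≠ 0) :
    ((p:ℤ)^(2*k)) ∣ bfun (p^k*d) - bfun (p^(k-1)*d) := by
  set N := p^(k-1)*d with hN
  have hpk : p^k*d = p*N := by
    rw [hN, ← mul_assoc, ← pow_succ']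
    congr 2
    omega
  have hexp : p^2 * (p^(k-1))^2 = p^(2*k) := by
    rw [← pow_mul, ← pow_add]
    congr 1
    omega
  have hj : p^(2*k) ∣ 2*p^2*N^2 := ⟨2*d^2, by rw [hN, mul_pow, ← hexp]; ring⟩
  have hkey := keyCong p (2*k) N hp hj (Or.inl hodd)
  have hdvd := dvd_of_zmod_eq hkey
  have hcast : ((p^(2*k) : ℕ) : ℤ) = (p:ℤ)^(2*k) := by push_cast; ring
  rw [hcast] at hdvd
  -- signs
  have hop : Odd p := hp.odd_of_ne_two hodd
  have hsign : ∀ j, (-1:ℤ)^(p^j*d) = (-1)^d := by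
    intro j
    rw [pow_mul, Odd.neg_one_pow (hop.pow)]
  have hb : bfun (p^k*d) - bfun (p^(k-1)*d)
      = (-1)^d * (((2*(p*N)).choose (p*N) : ℤ) - ((2*N).choose N : ℤ)) := by
    rw [bfun, bfun, hsign k, hsign (k-1), ← hN, ← hpk]
    ring
  rw [hb]
  exact Dvd.dvd.mul_left (by simpa using (dvd_neg.mpr hdvd)) _

lemma t_two (k d : ℕ) (hk : 2 ≤ k) (hd : d ≠ 0) :
    ((2:ℤ)^(2*k+1)) ∣ bfun (2^k*d) - bfun (2^(k-1)*d) := by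
  set N := 2^(k-1)*d with hN
  have hpk : 2^k*d = 2*N := by
    rw [hN, ← mul_assoc, ← pow_succ']
    congr 2
    omega
  have hexp : 2*2^2 * ((2:ℕ)^(k-1))^2 = 2^(2*k+1) := by
    rw [show (2:ℕ)*2^2 = 2^3 by norm_num, ← pow_mul, ← pow_add]
    congr 1
    omega
  have hj : 2^(2*k+1) ∣ 2*2^2*N^2 := ⟨d^2, by rw [hN, mul_pow, ← hexp]; ring⟩
  have h2N : 2 ∣ N := ⟨2^(k-2)*d, by rw [hN, ← mul_assoc, ← pow_succ']; congr 2; omega⟩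
  have hkey := keyCong 2 (2*k+1) N Nat.prime_two hj (Or.inr h2N)
  have hdvd := dvd_of_zmod_eq hkey
  have hcast : (((2:ℕ)^(2*k+1) : ℕ) : ℤ) = (2:ℤ)^(2*k+1) := by push_cast; ring
  rw [hcast] at hdvd
  have hsign : ∀ j, 1 ≤ j → (-1:ℤ)^(2^j*d) = 1 := by
    intro j hj1
    refine Even.neg_one_pow ?_
    have : 2 ∣ 2^j*d := Dvd.dvd.mul_right (dvd_pow_self 2 (by omega)) d
    exact (even_iff_two_dvd).mpr this
  have hb : bfun (2^k*d) - bfun (2^(k-1)*d)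
      = ((2*(2*N)).choose (2*N) : ℤ) - ((2*N).choose N : ℤ) := by
    rw [bfun, bfun, hsign k (by omega), hsign (k-1) (by omega), ← hN, ← hpk]
    ring
  rw [hb]
  simpa using (dvd_neg.mpr hdvd)

lemma t_two1 (d : ℕ) (hd : Odd d) : (8:ℤ) ∣ bfun (2*d) - bfun d := by
  have hkey := keyCong2 d hd
  have h1 : (8:ℤ) ∣ ((2*(2*d)).choose (2*d) : ℤ) - 3*((2*d).choose d : ℤ) := by
    rw [show (8:ℤ) = ((8:ℕ):ℤ) by norm_num, ← ZMod.intCast_zmod_eq_zero_iff_dvd]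
    push_cast
    rw [hkey]
    ring
  have h2 : (2:ℤ) ∣ ((2*d).choose d : ℤ) := by
    exact_mod_cast Int.natCast_dvd_natCast.mpr (two_dvd_choose d hd.pos.ne')
  have h3 : (8:ℤ) ∣ 4*((2*d).choose d : ℤ) := by
    obtain ⟨x, hx⟩ := h2
    exact ⟨x, by rw [hx]; ring⟩
  have hb : bfun (2*d) - bfun d
      = (((2*(2*d)).choose (2*d) : ℤ) - 3*((2*d).choose d : ℤ)) + 4*((2*d).choose d : ℤ) := by
    rw [bfun, bfun, Even.neg_one_pow (even_two_mul d), Odd.neg_one_pow hd]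
    ring
  rw [hb]
  exact dvd_add h1 h3

lemma even_bfun (l : ℕ) (hl : l ≠ 0) : (2:ℤ) ∣ bfun l := by
  have := two_dvd_choose l hl
  obtain ⟨x, hx⟩ := this
  exact ⟨(-1)^l * x, by rw [bfun, hx]; push_cast; ring⟩

end part5
section part6
open Finset Nat ArithmeticFunction

lemma dvd_S_two_always (m : ℕ) : (2:ℤ) ∣ Sfun m := by
  refine Finset.dvd_sum ?_
  intro l hl
  have hl0 : l ≠ 0 := (Nat.pos_of_mem_divisors hl).ne'
  exact Dvd.dvd.mul_left (even_bfun l hl0) _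

lemma dvd_S_odd (p m : ℕ) (hp : p.Prime) (hp2 : p ≠ 2) (hm : m ≠ 0) (hdvd : p ∣ m) :
    ((p:ℤ)^(2*m.factorization p)) ∣ Sfun m := by
  set k := m.factorization p with hk
  have hk1 : 1 ≤ k := hp.factorization_pos_of_dvd hm hdvd
  have hsplit := Nat.ordProj_mul_ordCompl_eq_self m p
  have hn0 : m / p^k ≠ 0 := (Nat.ordCompl_pos p hm).ne'
  have hpn : ¬ p ∣ m / p^k := Nat.not_dvd_ordCompl hp hm
  have hSm : Sfun m = Sfun (p^k * (m / p^k)) := by rw [hsplit]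
  rw [hSm, regroup p k (m / p^k) hp hk1 hn0 hpn]
  refine Finset.dvd_sum ?_
  intro d hd
  have hd0 : d ≠ 0 := (Nat.pos_of_mem_divisors hd).ne'
  exact Dvd.dvd.mul_left (t_odd p k d hp hp2 hk1 hd0) _

lemma dvd_S_two (m : ℕ) (hm : m ≠ 0) (hdvd : 2 ∣ m) :
    ((2:ℤ)^(2*m.factorization 2 + 1)) ∣ Sfun m := by
  set k := m.factorization 2 with hk
  have hk1 : 1 ≤ k := Nat.prime_two.factorization_pos_of_dvd hm hdvd
  have hsplit := Nat.ordProj_mul_ordCompl_eq_self m 2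
  have hn0 : m / 2^k ≠ 0 := (Nat.ordCompl_pos 2 hm).ne'
  have hpn : ¬ 2 ∣ m / 2^k := Nat.not_dvd_ordCompl Nat.prime_two hm
  have hSm : Sfun m = Sfun (2^k * (m / 2^k)) := by rw [hsplit]
  rw [hSm, regroup 2 k (m / 2^k) Nat.prime_two hk1 hn0 hpn]
  refine Finset.dvd_sum ?_
  intro d hd
  have hdn : d ∣ m / 2^k := (Nat.mem_divisors.mp hd).1
  have hd0 : d ≠ 0 := (Nat.pos_of_mem_divisors hd).ne'
  rcases Nat.lt_or_ge k 2 with hk2 | hk2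
  · -- k = 1
    have hk1' : k = 1 := by omega
    have hdo : Odd d := by
      rw [Nat.odd_iff]
      rcases Nat.even_or_odd d with he | ho
      · exact absurd (he.two_dvd.trans hdn) hpn
      · exact Nat.odd_iff.mp ho
    have h8 := t_two1 d hdo
    have hb : bfun (2^k*d) - bfun (2^(k-1)*d) = bfun (2*d) - bfun d := by
      rw [hk1']
      norm_num
    have hpow : ((2:ℤ)^(2*k+1)) = 8 := by rw [hk1']; norm_num
    rw [hpow, hb]
    exact Dvd.dvd.mul_left h8 _
  · exact Dvd.dvd.mul_left (t_two k d hk2 hd0) _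

lemma main_dvd (m : ℕ) (hm : m ≠ 0) : ((2*m^2 : ℕ) : ℤ) ∣ Sfun m := by
  have hn0 : (2*m^2 : ℕ) ≠ 0 := by positivity
  have hfac : ((2*m^2 : ℕ) : ℤ)
      = ∏ p ∈ (2*m^2 : ℕ).primeFactors, (p:ℤ)^((2*m^2 : ℕ).factorization p) := by
    conv_lhs => rw [← Nat.factorization_prod_pow_eq_self hn0]
    rw [Nat.prod_factorization_eq_prod_primeFactors]
    push_cast
    rfl
  rw [hfac]
  refine Finset.prod_dvd_of_coprime ?_ ?_
  · intro p hp q hq hne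
    have pp := Nat.prime_of_mem_primeFactors hp
    have qq := Nat.prime_of_mem_primeFactors hq
    have : IsCoprime (p:ℤ) (q:ℤ) :=
      Nat.isCoprime_iff_coprime.mpr ((Nat.coprime_primes pp qq).mpr hne)
    exact (this.pow)
  · intro p hp
    have pp := Nat.prime_of_mem_primeFactors hp
    have hvp : (2*m^2 : ℕ).factorization p
        = (if p = 2 then 1 else 0) + 2 * m.factorization p := by
      rw [Nat.factorization_mul (by norm_num) (by positivity), Nat.factorization_pow]
      simp [Nat.Prime.factorization Nat.prime_two, Finsupp.single_apply, eq_comm,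
        mul_comm, two_mul]
    by_cases hp2 : p = 2
    · subst hp2
      rw [hvp, if_pos rfl]
      by_cases h2m : 2 ∣ m
      · have := dvd_S_two m hm h2m
        have he : 1 + 2 * m.factorization 2 = 2 * m.factorization 2 + 1 := by omega
        rw [he]
        exact_mod_cast this
      · have hz : m.factorization 2 = 0 := Nat.factorization_eq_zero_of_not_dvd h2m
        rw [hz]
        norm_num
        exact_mod_cast dvd_S_two_always m
    · have hpm : p ∣ m := by
        have hpd : p ∣ 2*m^2 := Nat.dvd_of_mem_primeFactors hp
        rcases (Nat.Prime.dvd_mul pp).mp hpd with h2 | hm2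
        · exact absurd ((Nat.prime_dvd_prime_iff_eq pp Nat.prime_two).mp h2) hp2
        · exact pp.dvd_of_dvd_pow hm2
      rw [hvp, if_neg hp2, zero_add]
      exact dvd_S_odd p m pp hp2 hm hpm

end part6

/-- For every positive integer `m`, the rational number
`d_{m,m} = (1/(2m²)) ∑_{l | m} (-1)^l μ(m/l) (2l choose l)` is an integer;
equivalently `2m²` divides the sum. -/
theorem dmm_is_integer (m : ℕ) (hm : 0 < m) :
    ∃ d : ℤ,
      (1 / (2 * (m : ℚ) ^ 2)) *
          (∑ l ∈ m.divisors, (-1 : ℚ) ^ l * (moebius (m / l) : ℚ) * ((2 * l).choose l : ℚ))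
        = (d : ℚ) := by
  obtain ⟨d, hd⟩ := main_dvd m hm.ne'
  refine ⟨d, ?_⟩
  have hsum : (∑ l ∈ m.divisors, (-1 : ℚ) ^ l * (moebius (m / l) : ℚ) * ((2 * l).choose l : ℚ))
      = ((Sfun m : ℤ) : ℚ) := by
    rw [Sfun]
    push_cast [bfun]
    refine Finset.sum_congr rfl ?_
    intro l _
    ring
  rw [hsum, hd]
  have hm0 : (m:ℚ) ≠ 0 := Nat.cast_ne_zero.mpr hm.ne'
  push_cast
  field_simp
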